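/- Let C be a real matrix (edges × nodes) in which every row has exactly one +1 entry and one −1 entry in distinct columns and zeros elsewhere, with maximum column support size δ_max; let p ≥ 1 and A = C ⊗ I_p. Let σ : R → nodes be a function with multiplicities at most a_max (i.e., #{r : σ(r) = i} ≤ a_max for every node i), and let E be the corresponding selection matrix, taken blockwise with I_p (so E = E₀ ⊗ I_p for the 0–1 matrix E₀ with rows e_{σ(r)}ᵀ). Then for all vectors x, y, w of conforming dimensions: ‖Ax − y‖² + ‖Ex − w‖² ≤ (2δ_max + a_max + 2)·(‖x‖² + ‖y‖² + ‖w‖²). -/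

import Mathlib

open Matrix Kronecker

lemma normsq_eq {ι : Type*} [Fintype ι] (v : EuclideanSpace ℝ ι) :
    ‖v‖ ^ 2 = ∑ k, (v k) ^ 2 := by
  rw [EuclideanSpace.norm_eq, Real.sq_sqrt (by positivity)]
  simp [sq_abs]

lemma kron_mulVec {R V : Type*} [Fintype R] [Fintype V] [DecidableEq V] {p : ℕ}
    (C : Matrix R V ℝ) (x : V × Fin p → ℝ) (r : R) (t : Fin p) :
    (C ⊗ₖ (1 : Matrix (Fin p) (Fin p) ℝ)).mulVec x (r, t) = ∑ v : V, C r v * x (v, t) := by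
  rw [Matrix.mulVec, dotProduct, Fintype.sum_prod_type]
  refine Finset.sum_congr rfl fun v _ => ?_
  have : ∀ s : Fin p, (C ⊗ₖ (1 : Matrix (Fin p) (Fin p) ℝ)) (r,t) (v,s)
      = C r v * if t = s then 1 else 0 := by
    intro s; simp [Matrix.kroneckerMap_apply, Matrix.one_apply]
  simp only [this, ite_mul, one_mul, zero_mul, mul_ite, mul_zero, mul_one]
  rw [Finset.sum_ite_eq]
  simp

lemma row_sum_eq {R V : Type*} [Fintype R] [Fintype V] [DecidableEq V]
    (C : Matrix R V ℝ) (x : V → ℝ) (r : R)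
    (i j : V) (hij : i ≠ j) (h1 : C r i = 1) (h2 : C r j = -1)
    (h0 : ∀ k : V, k ≠ i → k ≠ j → C r k = 0) :
    ∑ v : V, C r v * x v = x i - x j := by
  rw [show (Finset.univ : Finset V) = insert i (insert j (Finset.univ \ {i, j})) by
    ext v; by_cases hv : v = i <;> by_cases hv2 : v = j <;> simp [hv, hv2, hij]]
  rw [Finset.sum_insert (by simp [hij]), Finset.sum_insert (by simp [hij.symm, Ne.symm hij])]
  have : ∑ v ∈ Finset.univ \ {i, j}, C r v * x v = 0 := by
    apply Finset.sum_eq_zero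
    intro v hv
    simp only [Finset.mem_sdiff, Finset.mem_insert, Finset.mem_singleton] at hv
    rw [h0 v (by tauto) (by tauto), zero_mul]
  rw [this, h1, h2]; ring

set_option maxHeartbeats 1000000 in
/-- The paper's Lipschitz-constant bound: with `A = C ⊗ I_p` for an incidence matrix `C` of
maximum column support `δ_max`, and `E = E₀ ⊗ I_p` for a selection matrix `E₀` with
multiplicities at most `a_max`, one has
`‖Ax − y‖² + ‖Ex − w‖² ≤ (2δ_max + a_max + 2)(‖x‖² + ‖y‖² + ‖w‖²)`. -/
theorem stmt_15 {R V S : Type*} [Fintype R] [Fintype V] [Fintype S] [DecidableEq V]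
    {p : ℕ} (hp : 1 ≤ p) (C : Matrix R V ℝ)
    (hC : ∀ r : R, ∃ i j : V, i ≠ j ∧ C r i = 1 ∧ C r j = -1 ∧
      ∀ k : V, k ≠ i → k ≠ j → C r k = 0)
    (σ : S → V) (amax : ℕ)
    (hσ : ∀ i : V, (Finset.univ.filter fun r : S => σ r = i).card ≤ amax) :
    let δmax : ℕ := Finset.univ.sup fun i : V =>
      (Finset.univ.filter fun r : R => C r i ≠ 0).card
    let A : Matrix (R × Fin p) (V × Fin p) ℝ := C ⊗ₖ (1 : Matrix (Fin p) (Fin p) ℝ)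
    let E : Matrix (S × Fin p) (V × Fin p) ℝ :=
      (Matrix.of fun r c => if c = σ r then (1 : ℝ) else 0) ⊗ₖ (1 : Matrix (Fin p) (Fin p) ℝ)
    ∀ (x : EuclideanSpace ℝ (V × Fin p)) (y : EuclideanSpace ℝ (R × Fin p))
      (w : EuclideanSpace ℝ (S × Fin p)),
      ‖(WithLp.equiv 2 (R × Fin p → ℝ)).symm (A.mulVec x) - y‖ ^ 2 +
          ‖(WithLp.equiv 2 (S × Fin p → ℝ)).symm (E.mulVec x) - w‖ ^ 2 ≤
        (2 * (δmax : ℝ) + (amax : ℝ) + 2) * (‖x‖ ^ 2 + ‖y‖ ^ 2 + ‖w‖ ^ 2) := by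
  intro δmax A E x y w
  classical
  choose i j hij h1 h2 h0 using hC
  set δ : ℝ := (δmax : ℝ) with hδdef
  have hδ0 : (0:ℝ) ≤ δ := Nat.cast_nonneg _
  have ha0 : (0:ℝ) ≤ (amax : ℝ) := Nat.cast_nonneg _
  -- mulVec computations
  have hAx : ∀ (r : R) (t : Fin p), A.mulVec x (r, t) = x (i r, t) - x (j r, t) := by
    intro r t
    rw [show A.mulVec x = (C ⊗ₖ (1 : Matrix (Fin p) (Fin p) ℝ)).mulVec x from rfl,
      kron_mulVec, row_sum_eq C (fun v => x (v, t)) r (i r) (j r) (hij r) (h1 r) (h2 r) (h0 r)]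
  have hEx : ∀ (s : S) (t : Fin p), E.mulVec x (s, t) = x (σ s, t) := by
    intro s t
    rw [show E.mulVec x = ((Matrix.of fun r c => if c = σ r then (1:ℝ) else 0)
        ⊗ₖ (1 : Matrix (Fin p) (Fin p) ℝ)).mulVec x from rfl, kron_mulVec]
    simp only [Matrix.of_apply, ite_mul, one_mul, zero_mul]
    rw [Finset.sum_ite_eq']
    simp
  -- norms as sums
  set X : ℝ := ∑ vt : V × Fin p, (x vt) ^ 2 with hXdef
  set Y : ℝ := ∑ rt : R × Fin p, (y rt) ^ 2 with hYdef
  set W : ℝ := ∑ st : S × Fin p, (w st) ^ 2 with hWdef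
  have hX : ‖x‖ ^ 2 = X := normsq_eq x
  have hY : ‖y‖ ^ 2 = Y := normsq_eq y
  have hW : ‖w‖ ^ 2 = W := normsq_eq w
  have hX0 : 0 ≤ X := Finset.sum_nonneg fun _ _ => sq_nonneg _
  have hY0 : 0 ≤ Y := Finset.sum_nonneg fun _ _ => sq_nonneg _
  have hW0 : 0 ≤ W := Finset.sum_nonneg fun _ _ => sq_nonneg _
  have hL1 : ‖(WithLp.equiv 2 (R × Fin p → ℝ)).symm (A.mulVec x) - y‖ ^ 2
      = ∑ rt : R × Fin p, (x (i rt.1, rt.2) - x (j rt.1, rt.2) - y rt) ^ 2 := by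
    rw [normsq_eq]
    refine Finset.sum_congr rfl fun rt _ => ?_
    have : ((WithLp.equiv 2 (R × Fin p → ℝ)).symm (A.mulVec x) - y) rt
        = A.mulVec x rt - y rt := rfl
    rw [this, show rt = (rt.1, rt.2) from rfl, hAx rt.1 rt.2]
  have hL2 : ‖(WithLp.equiv 2 (S × Fin p → ℝ)).symm (E.mulVec x) - w‖ ^ 2
      = ∑ st : S × Fin p, (x (σ st.1, st.2) - w st) ^ 2 := by
    rw [normsq_eq]
    refine Finset.sum_congr rfl fun st _ => ?_
    have : ((WithLp.equiv 2 (S × Fin p → ℝ)).symm (E.mulVec x) - w) st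
        = E.mulVec x st - w st := rfl
    rw [this, show st = (st.1, st.2) from rfl, hEx st.1 st.2]
  -- counting bounds
  have hdeg : ∀ v : V, ((Finset.univ.filter fun r : R => C r v ≠ 0).card : ℝ) ≤ δ := by
    intro v
    exact_mod_cast Nat.cast_le.mpr (Finset.le_sup (f := fun i : V =>
      (Finset.univ.filter fun r : R => C r i ≠ 0).card) (Finset.mem_univ v))
  have hfilter : ∀ r : R, (Finset.univ.filter fun v : V => C r v ≠ 0) = {i r, j r} := by
    intro r
    ext v
    simp only [Finset.mem_filter, Finset.mem_univ, true_and, Finset.mem_insert,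
      Finset.mem_singleton]
    constructor
    · intro hv
      by_contra hcon
      push_neg at hcon
      exact hv (h0 r v hcon.1 hcon.2)
    · rintro (rfl | rfl)
      · rw [h1 r]; norm_num
      · rw [h2 r]; norm_num
  -- key counting: ∑_{r,t} (x(i r,t)² + x(j r,t)²) ≤ δ X
  have hcount1 : ∑ rt : R × Fin p, ((x (i rt.1, rt.2)) ^ 2 + (x (j rt.1, rt.2)) ^ 2) ≤ δ * X := by
    have step : ∀ (r : R) (t : Fin p), (x (i r, t)) ^ 2 + (x (j r, t)) ^ 2
        = ∑ v : V, if C r v ≠ 0 then (x (v, t)) ^ 2 else 0 := by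
      intro r t
      rw [← Finset.sum_filter, hfilter r, Finset.sum_pair (hij r)]
    calc ∑ rt : R × Fin p, ((x (i rt.1, rt.2)) ^ 2 + (x (j rt.1, rt.2)) ^ 2)
        = ∑ r : R, ∑ t : Fin p, ∑ v : V, (if C r v ≠ 0 then (x (v, t)) ^ 2 else 0) := by
          rw [Fintype.sum_prod_type]
          exact Finset.sum_congr rfl fun r _ => Finset.sum_congr rfl fun t _ => step r t
      _ = ∑ r : R, ∑ v : V, ∑ t : Fin p, (if C r v ≠ 0 then (x (v, t)) ^ 2 else 0) :=
          Finset.sum_congr rfl fun r _ => Finset.sum_comm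
      _ = ∑ v : V, ∑ r : R, ∑ t : Fin p, (if C r v ≠ 0 then (x (v, t)) ^ 2 else 0) :=
          Finset.sum_comm
      _ = ∑ v : V, ((Finset.univ.filter fun r : R => C r v ≠ 0).card : ℝ)
            * ∑ t : Fin p, (x (v, t)) ^ 2 := by
          refine Finset.sum_congr rfl fun v _ => ?_
          have : ∀ r : R, ∑ t : Fin p, (if C r v ≠ 0 then (x (v, t)) ^ 2 else 0)
              = if C r v ≠ 0 then (∑ t : Fin p, (x (v, t)) ^ 2) else 0 := by
            intro r; split <;> simp
          simp only [this]
          rw [← Finset.sum_filter, Finset.sum_const, nsmul_eq_mul]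
      _ ≤ ∑ v : V, δ * ∑ t : Fin p, (x (v, t)) ^ 2 := by
          refine Finset.sum_le_sum fun v _ => ?_
          exact mul_le_mul_of_nonneg_right (hdeg v)
            (Finset.sum_nonneg fun _ _ => sq_nonneg _)
      _ = δ * X := by rw [hXdef, Fintype.sum_prod_type, Finset.mul_sum]
  have hcount2 : ∑ st : S × Fin p, (x (σ st.1, st.2)) ^ 2 ≤ (amax : ℝ) * X := by
    have step : ∀ (s : S) (t : Fin p), (x (σ s, t)) ^ 2
        = ∑ v : V, if σ s = v then (x (v, t)) ^ 2 else 0 := by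
      intro s t
      rw [Finset.sum_ite_eq]
      simp
    calc ∑ st : S × Fin p, (x (σ st.1, st.2)) ^ 2
        = ∑ s : S, ∑ t : Fin p, ∑ v : V, (if σ s = v then (x (v, t)) ^ 2 else 0) := by
          rw [Fintype.sum_prod_type]
          exact Finset.sum_congr rfl fun s _ => Finset.sum_congr rfl fun t _ => step s t
      _ = ∑ s : S, ∑ v : V, ∑ t : Fin p, (if σ s = v then (x (v, t)) ^ 2 else 0) :=
          Finset.sum_congr rfl fun s _ => Finset.sum_comm
      _ = ∑ v : V, ∑ s : S, ∑ t : Fin p, (if σ s = v then (x (v, t)) ^ 2 else 0) :=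
          Finset.sum_comm
      _ = ∑ v : V, ((Finset.univ.filter fun s : S => σ s = v).card : ℝ)
            * ∑ t : Fin p, (x (v, t)) ^ 2 := by
          refine Finset.sum_congr rfl fun v _ => ?_
          have : ∀ s : S, ∑ t : Fin p, (if σ s = v then (x (v, t)) ^ 2 else 0)
              = if σ s = v then (∑ t : Fin p, (x (v, t)) ^ 2) else 0 := by
            intro s; split <;> simp
          simp only [this]
          rw [← Finset.sum_filter, Finset.sum_const, nsmul_eq_mul]
      _ ≤ ∑ v : V, (amax : ℝ) * ∑ t : Fin p, (x (v, t)) ^ 2 := by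
          refine Finset.sum_le_sum fun v _ => ?_
          exact mul_le_mul_of_nonneg_right (by exact_mod_cast hσ v)
            (Finset.sum_nonneg fun _ _ => sq_nonneg _)
      _ = (amax : ℝ) * X := by rw [hXdef, Fintype.sum_prod_type, Finset.mul_sum]
  -- Key inequality I
  have keyI : ∑ rt : R × Fin p, (x (i rt.1, rt.2) - x (j rt.1, rt.2) - y rt) ^ 2
      ≤ (2 * δ + 1) * (X + Y) := by
    by_cases hR : Nonempty R
    · have hδ1 : (1:ℝ) ≤ δ := by
        obtain ⟨r⟩ := hR
        have h1' : (1:ℕ) ≤ (Finset.univ.filter fun r' : R => C r' (i r) ≠ 0).card := by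
          refine Finset.card_pos.mpr ⟨r, ?_⟩
          simp only [Finset.mem_filter, Finset.mem_univ, true_and]
          rw [h1 r]; norm_num
        have h2' : (Finset.univ.filter fun r' : R => C r' (i r) ≠ 0).card ≤ δmax :=
          Finset.le_sup (f := fun v : V =>
            (Finset.univ.filter fun r' : R => C r' v ≠ 0).card) (Finset.mem_univ (i r))
        have h3' : (1:ℕ) ≤ δmax := le_trans h1' h2'
        rw [hδdef]
        exact_mod_cast h3'
      have hδpos : (0:ℝ) < δ := lt_of_lt_of_le one_pos hδ1
      rw [← mul_le_mul_iff_right₀ hδpos]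
      have perterm : ∀ rt : R × Fin p,
          δ * (x (i rt.1, rt.2) - x (j rt.1, rt.2) - y rt) ^ 2
          ≤ (2 * δ + 1) * ((x (i rt.1, rt.2)) ^ 2 + (x (j rt.1, rt.2)) ^ 2)
            + δ * (2 * δ + 1) * (y rt) ^ 2 := by
        intro rt
        set u := x (i rt.1, rt.2)
        set v := x (j rt.1, rt.2)
        set c := y rt
        nlinarith [sq_nonneg (u + v), sq_nonneg (u + δ * c), sq_nonneg (v - δ * c),
          mul_nonneg hδ0 (sq_nonneg (u + v))]
      calc δ * ∑ rt : R × Fin p, (x (i rt.1, rt.2) - x (j rt.1, rt.2) - y rt) ^ 2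
          = ∑ rt : R × Fin p, δ * (x (i rt.1, rt.2) - x (j rt.1, rt.2) - y rt) ^ 2 :=
            Finset.mul_sum _ _ _
        _ ≤ ∑ rt : R × Fin p, ((2 * δ + 1) * ((x (i rt.1, rt.2)) ^ 2 + (x (j rt.1, rt.2)) ^ 2)
              + δ * (2 * δ + 1) * (y rt) ^ 2) :=
            Finset.sum_le_sum fun rt _ => perterm rt
        _ = (2 * δ + 1) * (∑ rt : R × Fin p, ((x (i rt.1, rt.2)) ^ 2 + (x (j rt.1, rt.2)) ^ 2))
              + δ * (2 * δ + 1) * Y := by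
            rw [Finset.sum_add_distrib, ← Finset.mul_sum, ← Finset.mul_sum]
        _ ≤ (2 * δ + 1) * (δ * X) + δ * (2 * δ + 1) * Y := by
            have : (0:ℝ) ≤ 2 * δ + 1 := by linarith
            nlinarith [hcount1]
        _ = δ * ((2 * δ + 1) * (X + Y)) := by ring
    · haveI : IsEmpty R := not_nonempty_iff.mp hR
      rw [Finset.univ_eq_empty, Finset.sum_empty]
      positivity
  -- Key inequality II
  have keyII : ∑ st : S × Fin p, (x (σ st.1, st.2) - w st) ^ 2
      ≤ ((amax : ℝ) + 1) * (X + W) := by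
    by_cases hS : Nonempty S
    · have ha1 : (1:ℝ) ≤ (amax : ℝ) := by
        obtain ⟨s⟩ := hS
        have h1' : (1:ℕ) ≤ (Finset.univ.filter fun s' : S => σ s' = σ s).card :=
          Finset.card_pos.mpr ⟨s, by simp⟩
        have : (1:ℕ) ≤ amax := le_trans h1' (hσ (σ s))
        exact_mod_cast this
      have hapos : (0:ℝ) < (amax : ℝ) := lt_of_lt_of_le one_pos ha1
      rw [← mul_le_mul_iff_right₀ hapos]
      have perterm : ∀ st : S × Fin p,
          (amax : ℝ) * (x (σ st.1, st.2) - w st) ^ 2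
          ≤ ((amax : ℝ) + 1) * (x (σ st.1, st.2)) ^ 2
            + (amax : ℝ) * ((amax : ℝ) + 1) * (w st) ^ 2 := by
        intro st
        set u := x (σ st.1, st.2)
        set c := w st
        nlinarith [sq_nonneg (u + (amax : ℝ) * c)]
      calc (amax : ℝ) * ∑ st : S × Fin p, (x (σ st.1, st.2) - w st) ^ 2
          = ∑ st : S × Fin p, (amax : ℝ) * (x (σ st.1, st.2) - w st) ^ 2 :=
            Finset.mul_sum _ _ _
        _ ≤ ∑ st : S × Fin p, (((amax : ℝ) + 1) * (x (σ st.1, st.2)) ^ 2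
              + (amax : ℝ) * ((amax : ℝ) + 1) * (w st) ^ 2) :=
            Finset.sum_le_sum fun st _ => perterm st
        _ = ((amax : ℝ) + 1) * (∑ st : S × Fin p, (x (σ st.1, st.2)) ^ 2)
              + (amax : ℝ) * ((amax : ℝ) + 1) * W := by
            rw [Finset.sum_add_distrib, ← Finset.mul_sum, ← Finset.mul_sum]
        _ ≤ ((amax : ℝ) + 1) * ((amax : ℝ) * X) + (amax : ℝ) * ((amax : ℝ) + 1) * W := by
            have : (0:ℝ) ≤ (amax : ℝ) + 1 := by linarith
            nlinarith [hcount2]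
        _ = (amax : ℝ) * (((amax : ℝ) + 1) * (X + W)) := by ring
    · haveI : IsEmpty S := not_nonempty_iff.mp hS
      rw [Finset.univ_eq_empty, Finset.sum_empty]
      positivity
  rw [hL1, hL2, hX, hY, hW]
  nlinarith [keyI, keyII, hX0, hY0, hW0, hδ0, ha0]
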